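/- arXiv:2006.14009 — 4 statements merged into one kernel-verified Lean document; each statement's English description precedes it below -/
import Mathlib

section
/- The spread relation is transitive: if Z is a spread of Y and Y is a spread of X, then Z is a spread of X. -/
open MeasureTheory ProbabilityTheory

/-- `ν` is a spread of `μ`: there is a coupling `(X, Y)` with `X ~ μ`, `Y ~ ν`
and `E[Y | X] = X` almost surely. -/
def IsSpread {E : Type*} [NormedAddCommGroup E] [NormedSpace ℝ E] [CompleteSpace E]
    [MeasurableSpace E] [BorelSpace E] (ν μ : Measure E) : Prop :=
  ∃ (Ω : Type) (_ : MeasurableSpace Ω) (P : Measure Ω) (_ : IsProbabilityMeasure P)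
    (X Y : Ω → E), Measurable X ∧ Measurable Y ∧
      P.map X = μ ∧ P.map Y = ν ∧
      P[Y | MeasurableSpace.comap X inferInstance] =ᵐ[P] X

set_option maxHeartbeats 1000000 in
theorem isSpread_trans {n : ℕ}
    (μX μY μZ : Measure (EuclideanSpace ℝ (Fin n)))
    [IsProbabilityMeasure μX] [IsProbabilityMeasure μY] [IsProbabilityMeasure μZ]
    (hZY : IsSpread μZ μY) (hYX : IsSpread μY μX) :
    IsSpread μZ μX := by
  classical
  set E := EuclideanSpace ℝ (Fin n) with hE
  obtain ⟨Ω₂, m₂, P₂, hP₂, Y₂, Z, hY₂, hZ, hY₂law, hZlaw, hZYc⟩ := hZY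
  obtain ⟨Ω₁, m₁, P₁, hP₁, X, Y₁, hX, hY₁, hXlaw, hY₁law, hYXc⟩ := hYX
  by_cases hZint : Integrable Z P₂
  · -- main case: glue the two couplings via the conditional distribution of `Z` given `Y₂`
    set κ : Kernel E E := condDistrib Z Y₂ P₂ with hκ
    set η : Kernel Ω₁ E := κ.comap Y₁ hY₁ with hη
    set π : Measure (Ω₁ × E) := P₁ ⊗ₘ η with hπ
    haveI : IsProbabilityMeasure π := by rw [hπ]; infer_instance
    set X' : Ω₁ × E → E := fun p => X p.1 with hX'def
    have hX' : Measurable X' := hX.comp measurable_fst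
    -- basic pushforward facts
    have hπfst : π.map Prod.fst = P₁ := Measure.fst_compProd P₁ η
    have hmapX' : π.map X' = μX := by
      rw [hX'def, show (fun p : Ω₁ × E => X p.1) = X ∘ Prod.fst from rfl,
        ← Measure.map_map hX measurable_fst, hπfst, hXlaw]
    -- disintegration of the second coupling
    have hρ : (P₂.map Y₂) ⊗ₘ κ = P₂.map (fun ω => (Y₂ ω, Z ω)) := by
      rw [hκ, condDistrib]
      have h1 : (P₂.map fun ω => (Y₂ ω, Z ω)).fst = P₂.map Y₂ :=
        Measure.fst_map_prodMk hZ
      rw [← h1]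
      exact Measure.disintegrate _ _
    -- law of the second coordinate of `π` is `μZ`
    have hπsnd : π.map Prod.snd = μZ := by
      ext s hs
      have hmk : ∀ a : Ω₁, (Prod.mk a ⁻¹' (Prod.snd ⁻¹' s : Set (Ω₁ × E))) = s := by
        intro a; rfl
      have hmk2 : ∀ a : E, (Prod.mk a ⁻¹' (Prod.snd ⁻¹' s : Set (E × E))) = s := by
        intro a; rfl
      rw [Measure.map_apply measurable_snd hs, hπ,
        Measure.compProd_apply (measurable_snd hs)]
      simp only [hmk, hη, Kernel.comap_apply]
      rw [show (∫⁻ a, κ (Y₁ a) s ∂P₁) = ∫⁻ y, κ y s ∂(P₁.map Y₁) from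
        (lintegral_map (Kernel.measurable_coe κ hs) hY₁).symm]
      rw [hY₁law, ← hY₂law]
      have h2 : ((P₂.map Y₂) ⊗ₘ κ) (Prod.snd ⁻¹' s) = ∫⁻ y, κ y s ∂(P₂.map Y₂) := by
        rw [Measure.compProd_apply (measurable_snd hs)]
        rfl
      rw [← h2, hρ, Measure.map_apply (hY₂.prodMk hZ) (measurable_snd hs), ← hZlaw,
        Measure.map_apply hZ hs]
      rfl
    -- integrability facts
    have hXint : Integrable X P₁ := integrable_condExp.congr hYXc
    have hY₂int : Integrable Y₂ P₂ := integrable_condExp.congr hZYc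
    have hY₁int : Integrable Y₁ P₁ := by
      have h1 : Integrable id (P₂.map Y₂) :=
        (integrable_map_measure measurable_id.aestronglyMeasurable hY₂.aemeasurable).mpr hY₂int
      rw [hY₂law, ← hY₁law] at h1
      exact (integrable_map_measure measurable_id.aestronglyMeasurable hY₁.aemeasurable).mp h1
    have hX'int : Integrable X' π := by
      have h1 : Integrable id (π.map X') := by
        rw [hmapX', ← hXlaw]
        exact (integrable_map_measure measurable_id.aestronglyMeasurable hX.aemeasurable).mpr hXint
      exact (integrable_map_measure measurable_id.aestronglyMeasurable hX'.aemeasurable).mp h1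
    have hZ'int : Integrable (fun p : Ω₁ × E => p.2) π := by
      have h1 : Integrable id (π.map Prod.snd) := by
        rw [hπsnd, ← hZlaw]
        exact (integrable_map_measure measurable_id.aestronglyMeasurable hZ.aemeasurable).mpr hZint
      exact (integrable_map_measure measurable_id.aestronglyMeasurable
        measurable_snd.aemeasurable).mp h1
    -- the barycenter function of `κ`
    set g : E → E := fun y => ∫ z, z ∂(κ y) with hg
    have hgsm : StronglyMeasurable g := by
      have : StronglyMeasurable (fun p : E × E => p.2) :=
        measurable_snd.stronglyMeasurable
      exact this.integral_kernel_prod_right'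
    have hgY₂ : (fun ω => g (Y₂ ω)) =ᵐ[P₂] Y₂ :=
      ((condExp_ae_eq_integral_condDistrib' hY₂ hZint).symm.trans hZYc)
    have hgid : ∀ᵐ y ∂(P₂.map Y₂), g y = y := by
      have hset : MeasurableSet {y : E | g y = y} :=
        measurableSet_eq_fun hgsm.measurable measurable_id
      exact (ae_map_iff hY₂.aemeasurable hset).mpr hgY₂
    have hgY₁ : ∀ᵐ ω ∂P₁, g (Y₁ ω) = Y₁ ω := by
      rw [hY₂law, ← hY₁law] at hgid
      exact ae_of_ae_map hY₁.aemeasurable hgid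
    -- conditional expectation property via the uniqueness characterization
    have hm : MeasurableSpace.comap X' inferInstance
        ≤ (Prod.instMeasurableSpace : MeasurableSpace (Ω₁ × E)) := hX'.comap_le
    refine ⟨Ω₁ × E, Prod.instMeasurableSpace, π, inferInstance, X', (fun p => p.2), hX',
      measurable_snd, hmapX', hπsnd, ?_⟩
    refine (ae_eq_condExp_of_forall_setIntegral_eq hm hZ'int
        (fun s _ _ => hX'int.integrableOn) (fun s hs _ => ?_) ?_).symm
    · -- set integral equality
      obtain ⟨t, ht, rfl⟩ := hs
      have hpre : X' ⁻¹' t = (X ⁻¹' t) ×ˢ (Set.univ : Set E) := by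
        ext p; simp [hX'def]
      -- right-hand side
      have hRHS : ∫ p in X' ⁻¹' t, p.2 ∂π = ∫ ω in X ⁻¹' t, g (Y₁ ω) ∂P₁ := by
        rw [hpre, hπ, Measure.setIntegral_compProd (hX ht) MeasurableSet.univ
          (by rw [← hπ]; exact hZ'int.integrableOn)]
        simp only [Measure.restrict_univ, hη, Kernel.comap_apply, hg]
      -- left-hand side
      have hLHS : ∫ p in X' ⁻¹' t, X' p ∂π = ∫ ω in X ⁻¹' t, X ω ∂P₁ := by
        have h := setIntegral_map (g := Prod.fst) (f := X) (μ := π) (s := X ⁻¹' t)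
          (hX ht) (by rw [hπfst]; exact hXint.1) measurable_fst.aemeasurable
        rw [hπfst] at h
        have hpre2 : X' ⁻¹' t = Prod.fst ⁻¹' (X ⁻¹' t) := rfl
        rw [hpre2]
        exact h.symm
      rw [hLHS, hRHS]
      have h1 : ∫ ω in X ⁻¹' t, g (Y₁ ω) ∂P₁ = ∫ ω in X ⁻¹' t, Y₁ ω ∂P₁ :=
        setIntegral_congr_ae (hX ht) (hgY₁.mono fun ω hω _ => hω)
      have h2 : ∫ ω in X ⁻¹' t, Y₁ ω ∂P₁
          = ∫ ω in X ⁻¹' t, (P₁[Y₁ | MeasurableSpace.comap X inferInstance]) ω ∂P₁ :=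
        (setIntegral_condExp hX.comap_le hY₁int ⟨t, ht, rfl⟩).symm
      have h3 : ∫ ω in X ⁻¹' t, (P₁[Y₁ | MeasurableSpace.comap X inferInstance]) ω ∂P₁
          = ∫ ω in X ⁻¹' t, X ω ∂P₁ :=
        setIntegral_congr_ae (hX ht) (hYXc.mono fun ω hω _ => hω)
      rw [h1, h2, h3]
    · -- m-measurability of X'
      refine StronglyMeasurable.aestronglyMeasurable ?_
      refine Measurable.stronglyMeasurable ?_
      exact fun s hs => ⟨s, hs, rfl⟩
  · -- degenerate case: `Z` is not integrable, so everything is a Dirac mass at 0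
    have hc0 : P₂[Z | MeasurableSpace.comap Y₂ inferInstance] = 0 := condExp_of_not_integrable hZint
    have hY₂0 : Y₂ =ᵐ[P₂] 0 := by
      refine hZYc.symm.trans ?_
      rw [hc0]
    have hμY : μY = Measure.dirac 0 := by
      rw [← hY₂law, Measure.map_congr hY₂0,
        show (0 : Ω₂ → E) = fun _ => (0 : E) from rfl, Measure.map_const]
      simp
    have hY₁0 : Y₁ =ᵐ[P₁] 0 := by
      have h1 : P₁ (Y₁ ⁻¹' {(0 : E)}ᶜ) = 0 := by
        have := Measure.map_apply (μ := P₁) hY₁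
          (MeasurableSet.compl (measurableSet_singleton (0 : E)))
        rw [hY₁law, hμY] at this
        rw [← this]
        simp
      refine (ae_iff).mpr ?_
      exact h1
    have hX0 : X =ᵐ[P₁] 0 := by
      refine hYXc.symm.trans ?_
      calc P₁[Y₁ | MeasurableSpace.comap X inferInstance]
          =ᵐ[P₁] P₁[(0 : Ω₁ → E) | MeasurableSpace.comap X inferInstance] :=
            condExp_congr_ae hY₁0
        _ = 0 := condExp_zero
    have hμX : μX = Measure.dirac 0 := by
      rw [← hXlaw, Measure.map_congr hX0,
        show (0 : Ω₁ → E) = fun _ => (0 : E) from rfl, Measure.map_const]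
      simp
    refine ⟨Ω₂, m₂, P₂, hP₂, (fun _ => 0), Z, measurable_const, hZ, ?_, hZlaw, ?_⟩
    · rw [hμX, Measure.map_const]
      simp
    · rw [condExp_of_not_integrable hZint]
      rfl
end

section
/- Let X be a real-valued random variable with E[X] = 0 and |X| ≤ C almost surely. Then the Bernoulli distribution placing equal mass 1/2 on +C and -C is a spread of X. -/
open MeasureTheory ProbabilityTheory

theorem bernoulli_isSpread_of_bounded
    {Ω : Type} [MeasurableSpace Ω] (P : Measure Ω) [IsProbabilityMeasure P]
    (X : Ω → ℝ) (hX : Measurable X) (C : ℝ) (hC : 0 < C)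
    (hmean : ∫ ω, X ω ∂P = 0) (hbdd : ∀ᵐ ω ∂P, |X ω| ≤ C) :
    IsSpread ((1/2 : ENNReal) • Measure.dirac C + (1/2 : ENNReal) • Measure.dirac (-C))
      (P.map X) := by
  classical
  set μ : Measure ℝ := volume.restrict (Set.Ioc 0 1) with hμdef
  have hμprob : IsProbabilityMeasure μ := ⟨by simp [hμdef, Real.volume_Ioc]⟩
  set p : Ω → ℝ := fun ω => (C + X ω) / (2 * C) with hpdef
  have hpmeas : Measurable p := (measurable_const.add hX).div_const _
  set P' : Measure (Ω × ℝ) := P.prod μ with hP'def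
  haveI : IsProbabilityMeasure P' := by infer_instance
  set X' : Ω × ℝ → ℝ := fun z => X z.1 with hX'def
  set Y : Ω × ℝ → ℝ := fun z => if z.2 ≤ p z.1 then C else -C with hYdef
  have hX' : Measurable X' := hX.comp measurable_fst
  have hS : MeasurableSet {z : Ω × ℝ | z.2 ≤ p z.1} :=
    measurableSet_le measurable_snd (hpmeas.comp measurable_fst)
  have hY : Measurable Y := Measurable.ite hS measurable_const measurable_const
  -- a.e. bound: p ω ∈ [0,1]
  have hp01 : ∀ᵐ ω ∂P, 0 ≤ p ω ∧ p ω ≤ 1 := by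
    filter_upwards [hbdd] with ω hω
    have h1 : -C ≤ X ω := (abs_le.1 hω).1
    have h2 : X ω ≤ C := (abs_le.1 hω).2
    constructor
    · apply div_nonneg (by linarith) (by linarith)
    · rw [div_le_one (by linarith)]; linarith
  have hXint : Integrable X P :=
    ⟨hX.aestronglyMeasurable, HasFiniteIntegral.of_bounded (C := C)
      (by filter_upwards [hbdd] with ω hω; simpa [Real.norm_eq_abs] using hω)⟩
  -- measure of Iic under μ
  have hμIic : ∀ t : ℝ, 0 ≤ t → t ≤ 1 → μ (Set.Iic t) = ENNReal.ofReal t := by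
    intro t h0 h1
    rw [hμdef, Measure.restrict_apply measurableSet_Iic]
    have : Set.Iic t ∩ Set.Ioc 0 1 = Set.Ioc 0 t := by
      ext x
      simp only [Set.mem_inter_iff, Set.mem_Iic, Set.mem_Ioc]
      exact ⟨fun ⟨ha, hb, hc⟩ => ⟨hb, ha⟩, fun ⟨hb, ha⟩ => ⟨ha, hb, ha.trans h1⟩⟩
    rw [this, Real.volume_Ioc, sub_zero]
  -- ∫ p = 1/2
  have hpint : Integrable p P := (integrable_const C |>.add hXint).div_const _
  have hintp : ∫ ω, p ω ∂P = 1/2 := by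
    rw [hpdef]
    simp only [integral_div, integral_add (integrable_const C) hXint, integral_const,
      measureReal_def, measure_univ, ENNReal.toReal_one, one_smul, hmean, add_zero]
    field_simp
  -- P' S = 1/2
  have hPS : P' {z : Ω × ℝ | z.2 ≤ p z.1} = 1/2 := by
    rw [hP'def, Measure.prod_apply hS]
    have : ∀ᵐ ω ∂P, μ (Prod.mk ω ⁻¹' {z : Ω × ℝ | z.2 ≤ p z.1}) = ENNReal.ofReal (p ω) := by
      filter_upwards [hp01] with ω hω
      have : Prod.mk ω ⁻¹' {z : Ω × ℝ | z.2 ≤ p z.1} = Set.Iic (p ω) := rfl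
      rw [this, hμIic _ hω.1 hω.2]
    rw [lintegral_congr_ae this,
      ← ofReal_integral_eq_lintegral_ofReal hpint (hp01.mono fun ω hω => hω.1), hintp]
    rw [ENNReal.ofReal_div_of_pos two_pos]
    norm_num
  refine ⟨Ω × ℝ, inferInstance, P', inferInstance, X', Y, hX', hY, ?_, ?_, ?_⟩
  · -- map X' = map X
    rw [hX'def, show (fun z : Ω × ℝ => X z.1) = X ∘ Prod.fst from rfl,
      ← Measure.map_map hX measurable_fst, hP'def, Measure.map_fst_prod, measure_univ, one_smul]
  · -- map Y = bernoulli
    ext s hs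
    rw [Measure.map_apply hY hs]
    simp only [Measure.coe_add, Measure.coe_smul, Pi.add_apply, Pi.smul_apply, smul_eq_mul,
      Measure.dirac_apply' _ hs]
    by_cases h1 : C ∈ s <;> by_cases h2 : -C ∈ s
    · have : Y ⁻¹' s = Set.univ := by
        ext z; simp only [Set.mem_preimage, Set.mem_univ, iff_true, hYdef]
        split_ifs <;> assumption
      rw [this]
      simp [Set.indicator_of_mem h1, Set.indicator_of_mem h2, measure_univ]
      rw [← one_div]
      exact (ENNReal.add_halves 1).symm
    · have : Y ⁻¹' s = {z : Ω × ℝ | z.2 ≤ p z.1} := by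
        ext z; simp only [Set.mem_preimage, Set.mem_setOf_eq, hYdef]
        split_ifs with h <;> simp [h, h1, h2]
      rw [this, hPS]
      simp [Set.indicator_of_mem h1, Set.indicator_of_notMem h2]
    · have : Y ⁻¹' s = {z : Ω × ℝ | z.2 ≤ p z.1}ᶜ := by
        ext z; simp only [Set.mem_preimage, Set.mem_compl_iff, Set.mem_setOf_eq, hYdef]
        split_ifs with h <;> simp [h, h1, h2]
      rw [this, measure_compl hS (by finiteness), hPS, measure_univ]
      simp [Set.indicator_of_mem h2, Set.indicator_of_notMem h1]
    · have : Y ⁻¹' s = ∅ := by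
        ext z; simp only [Set.mem_preimage, Set.mem_empty_iff_false, iff_false, hYdef]
        split_ifs <;> assumption
      rw [this]
      simp [Set.indicator_of_notMem h1, Set.indicator_of_notMem h2]
  · -- conditional expectation
    have hm : MeasurableSpace.comap X' inferInstance ≤ (inferInstance : MeasurableSpace (Ω × ℝ)) :=
      hX'.comap_le
    haveI : SigmaFinite (P'.trim hm) := by
      haveI : IsFiniteMeasure (P'.trim hm) := isFiniteMeasure_trim hm
      infer_instance
    have hYbd : ∀ z, ‖Y z‖ ≤ C := by
      intro z
      rw [hYdef]
      dsimp only
      split_ifs <;> simp [Real.norm_eq_abs, abs_of_pos hC, abs_neg]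
    have hYint : Integrable Y P' :=
      ⟨hY.aestronglyMeasurable, HasFiniteIntegral.of_bounded (C := C) (ae_of_all _ hYbd)⟩
    have hmap : P'.map Prod.fst = P := by
      rw [hP'def, Measure.map_fst_prod, measure_univ, one_smul]
    have hbdd' : ∀ᵐ z ∂P', |X z.1| ≤ C :=
      ae_of_ae_map (μ := P') (f := Prod.fst) measurable_fst.aemeasurable
        (p := fun ω => |X ω| ≤ C) (by rw [hmap]; exact hbdd)
    have hp01' : ∀ᵐ z ∂P', 0 ≤ p z.1 ∧ p z.1 ≤ 1 :=
      ae_of_ae_map (μ := P') (f := Prod.fst) measurable_fst.aemeasurable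
        (p := fun ω => 0 ≤ p ω ∧ p ω ≤ 1) (by rw [hmap]; exact hp01)
    have hX'int : Integrable X' P' :=
      ⟨hX'.aestronglyMeasurable, HasFiniteIntegral.of_bounded (C := C)
        (by filter_upwards [hbdd'] with z hz; simpa [Real.norm_eq_abs, hX'def] using hz)⟩
    -- inner integral computation
    have hinner : ∀ t : ℝ, 0 ≤ t → t ≤ 1 →
        ∫ u, (if u ≤ t then C else -C) ∂μ = C * (2 * t - 1) := by
      intro t h0 h1
      have hfun : ∀ u : ℝ, (if u ≤ t then C else -C)
          = (Set.Iic t).indicator (fun _ => 2 * C) u - C := by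
        intro u
        by_cases h : u ≤ t <;> simp [h] <;> ring
      rw [integral_congr_ae (ae_of_all _ hfun),
        integral_sub ((integrable_const (2*C)).indicator measurableSet_Iic) (integrable_const C),
        integral_indicator_const _ measurableSet_Iic, integral_const, measureReal_def, measureReal_def, measure_univ,
        hμIic t h0 h1, ENNReal.toReal_ofReal h0]
      simp only [smul_eq_mul, ENNReal.toReal_one, one_mul]
      ring
    refine (ae_eq_condExp_of_forall_setIntegral_eq hm hYint
      (fun s _ _ => hX'int.integrableOn) ?_ ?_).symm
    · intro s hs _
      obtain ⟨A, hA, rfl⟩ := hs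
      have hpre : X' ⁻¹' A = (X ⁻¹' A) ×ˢ (Set.univ : Set ℝ) := by
        ext z; simp [hX'def]
      have htA : MeasurableSet (X ⁻¹' A) := hX hA
      rw [hpre, hP'def, setIntegral_prod _ (hX'int.integrableOn),
        setIntegral_prod _ (hYint.integrableOn)]
      refine setIntegral_congr_ae htA ?_
      filter_upwards [hp01] with ω hω _
      have hYval : ∫ u in Set.univ, Y (ω, u) ∂μ = X ω := by
        rw [Measure.restrict_univ]
        have : ∀ u : ℝ, Y (ω, u) = if u ≤ p ω then C else -C := fun u => rfl
        rw [integral_congr_ae (ae_of_all _ this), hinner _ hω.1 hω.2]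
        rw [hpdef]
        field_simp
        ring
      rw [hYval, Measure.restrict_univ]
      simp only [hX'def]
      rw [integral_const, measureReal_def, measure_univ]
      simp
    · exact ⟨X', (show Measurable[MeasurableSpace.comap X' inferInstance] X' from
        fun s hs => ⟨s, hs, rfl⟩).stronglyMeasurable, Filter.EventuallyEq.rfl⟩
end

section
/- Let X be a real-valued random variable with E[X] = 0 and |X| ≤ C almost surely. Then the Gaussian N(0, πC²/2) is a spread of X. -/
open MeasureTheory ProbabilityTheory

open Real Filter Set

lemma aux_integral_mul_exp {b : ℝ} (hb : 0 < b) :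
    ∫ r in Ioi (0:ℝ), r * Real.exp (-b * r ^ 2) = (2 * b)⁻¹ := by
  have hb' : b ≠ 0 := hb.ne'
  have A : ∀ x : ℝ, HasDerivAt (fun x => -(2 * b)⁻¹ * Real.exp (-b * x ^ 2))
      (x * Real.exp (-b * x ^ 2)) x := by
    intro x
    convert ((hasDerivAt_pow 2 x).const_mul (-b)).exp.const_mul (-(2 * b)⁻¹) using 1
    · rfl
    · rfl
    field_simp
    ring
  have B : Tendsto (fun y : ℝ ↦ -(2 * b)⁻¹ * Real.exp (-b * y ^ 2))
      atTop (nhds (-(2 * b)⁻¹ * 0)) := by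
    refine Tendsto.const_mul _ ?_
    refine Real.tendsto_exp_atBot.comp ?_
    exact (tendsto_pow_atTop two_ne_zero).const_mul_atTop_of_neg (neg_lt_zero.2 hb)
  have := integral_Ioi_of_hasDerivAt_of_tendsto' (a := (0:ℝ)) (fun x _ => A x)
    (integrable_mul_exp_neg_mul_sq hb).integrableOn B
  rw [this]
  norm_num

section Gauss
variable {v : NNReal}

lemma gaussianReal_eq_withDensity (hv : v ≠ 0) :
    gaussianReal 0 v = volume.withDensity
      (fun x => (Real.toNNReal (gaussianPDFReal 0 v x) : ENNReal)) := by
  rw [gaussianReal_of_var_ne_zero 0 hv]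
  rfl

lemma pdf_smul (hv : v ≠ 0) (x g : ℝ) :
    (Real.toNNReal (gaussianPDFReal 0 v x)) • g
      = (Real.sqrt (2 * Real.pi * v))⁻¹ * (g * Real.exp (-(2 * (v:ℝ))⁻¹ * x ^ 2)) := by
  have hv0 : (0:ℝ) < v := by positivity
  rw [NNReal.smul_def, Real.coe_toNNReal _ (gaussianPDFReal_nonneg 0 v x)]
  have he : Real.exp (-(x - 0) ^ 2 / (2 * (v:ℝ))) = Real.exp (-(2 * (v:ℝ))⁻¹ * x ^ 2) := by
    rw [Real.exp_eq_exp]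
    field_simp
    ring
  rw [gaussianPDFReal, he, smul_eq_mul]
  ring

lemma integral_gaussianReal_eq (hv : v ≠ 0) (g : ℝ → ℝ) :
    ∫ x, g x ∂(gaussianReal 0 v)
      = ∫ x, (Real.sqrt (2 * Real.pi * v))⁻¹ * (g x * Real.exp (-(2 * (v:ℝ))⁻¹ * x ^ 2)) := by
  rw [gaussianReal_eq_withDensity hv,
    integral_withDensity_eq_integral_smul
      ((measurable_gaussianPDFReal 0 v).real_toNNReal) g]
  congr 1 with x
  rw [pdf_smul hv]

lemma integrable_abs_gaussianReal : Integrable (fun x => |x|) (gaussianReal 0 v) := by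
  by_cases hv : v = 0
  · simp only [hv, gaussianReal_zero_var]
    exact (integrable_const (|(0:ℝ)|)).congr (ae_eq_dirac (fun x : ℝ => |x|)).symm
  rw [gaussianReal_eq_withDensity hv,
    integrable_withDensity_iff_integrable_smul
      ((measurable_gaussianPDFReal 0 v).real_toNNReal)]
  have hv0 : (0:ℝ) < v := by positivity
  have h1 : Integrable (fun x : ℝ => |x| * Real.exp (-(2 * (v:ℝ))⁻¹ * x ^ 2)) := by
    have := (integrable_mul_exp_neg_mul_sq (b := (2 * (v:ℝ))⁻¹) (by positivity)).abs
    refine this.congr ?_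
    filter_upwards with x
    rw [abs_mul, abs_of_nonneg (Real.exp_pos _).le]
  refine ((h1.const_mul ((Real.sqrt (2 * Real.pi * v))⁻¹)).congr ?_)
  filter_upwards with x
  rw [pdf_smul hv]

lemma integral_abs_gaussianReal (hv : v ≠ 0) :
    ∫ x, |x| ∂(gaussianReal 0 v) = Real.sqrt (2 * (v:ℝ) / Real.pi) := by
  have hv0 : (0:ℝ) < v := by positivity
  rw [integral_gaussianReal_eq hv]
  rw [integral_const_mul]
  have : ∫ x : ℝ, |x| * Real.exp (-(2 * (v:ℝ))⁻¹ * x ^ 2)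
      = 2 * ∫ x in Ioi (0:ℝ), x * Real.exp (-(2 * (v:ℝ))⁻¹ * x ^ 2) := by
    rw [← integral_comp_abs (f := fun x => x * Real.exp (-(2 * (v:ℝ))⁻¹ * x ^ 2))]
    congr 1 with x
    rw [sq_abs]
  rw [this, aux_integral_mul_exp (by positivity)]
  rw [show (2 * ((2:ℝ) * (v:ℝ))⁻¹)⁻¹ = (v:ℝ) by field_simp]
  have h2v : (0:ℝ) ≤ 2 * v := by positivity
  rw [show 2 * Real.pi * (v:ℝ) = Real.pi * (2 * v) by ring,
    Real.sqrt_mul Real.pi_pos.le, Real.sqrt_div h2v,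
    ← Real.mul_self_sqrt h2v]
  have ha : Real.sqrt (2 * (v:ℝ)) ≠ 0 := by positivity
  have hb : Real.sqrt Real.pi ≠ 0 := by positivity
  field_simp
  rw [Real.sqrt_sq (Real.sqrt_nonneg _)]
end Gauss

lemma gaussianReal_map_neg {v : NNReal} :
    (gaussianReal 0 v).map (fun x => -x) = gaussianReal 0 v := by
  have h1 : (fun x : ℝ => -x) = ((-1 : ℝ) * ·) := by funext x; ring
  have h2 : (⟨(-1:ℝ)^2, sq_nonneg _⟩ : NNReal) = 1 := by
    ext; simp
  rw [h1, gaussianReal_map_const_mul, mul_zero]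
  congr 1
  ext; simp

lemma gaussian_symm_split {v : NNReal} {s : Set ℝ} (hs : MeasurableSet s) :
    gaussianReal 0 v ((fun x => |x|) ⁻¹' s) + gaussianReal 0 v ((fun x => -|x|) ⁻¹' s)
      = 2 * gaussianReal 0 v s := by
  set μ := gaussianReal 0 v with hμ
  have hmap : ∀ t : Set ℝ, MeasurableSet t → μ ((fun x : ℝ => -x) ⁻¹' t) = μ t := by
    intro t ht
    rw [hμ, ← Measure.map_apply measurable_neg ht, _root_.gaussianReal_map_neg]
  have h1 : (fun x : ℝ => |x|) ⁻¹' s ∩ Ici 0 = s ∩ Ici 0 := by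
    ext x; simp only [Set.mem_inter_iff, Set.mem_preimage, Set.mem_Ici]
    constructor
    · rintro ⟨h, hx⟩; rw [abs_of_nonneg hx] at h; exact ⟨h, hx⟩
    · rintro ⟨h, hx⟩; rw [abs_of_nonneg hx]; exact ⟨h, hx⟩
  have h2 : (fun x : ℝ => |x|) ⁻¹' s ∩ Iio 0 = (fun x : ℝ => -x) ⁻¹' (s ∩ Ioi 0) := by
    ext x
    simp only [Set.mem_inter_iff, Set.mem_preimage, Set.mem_Iio, Set.mem_Ioi]
    constructor
    · rintro ⟨h, hx⟩; rw [abs_of_neg hx] at h; exact ⟨h, by linarith⟩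
    · rintro ⟨h, hx⟩
      have hx0 : x < 0 := by linarith
      rw [abs_of_neg hx0]; exact ⟨h, hx0⟩
  have h3 : (fun x : ℝ => -|x|) ⁻¹' s ∩ Ici 0 = (fun x : ℝ => -x) ⁻¹' (s ∩ Iic 0) := by
    ext x
    simp only [Set.mem_inter_iff, Set.mem_preimage, Set.mem_Ici, Set.mem_Iic]
    constructor
    · rintro ⟨h, hx⟩; rw [abs_of_nonneg hx] at h; exact ⟨h, by linarith⟩
    · rintro ⟨h, hx⟩
      have hx0 : 0 ≤ x := by linarith
      rw [abs_of_nonneg hx0]; exact ⟨h, hx0⟩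
  have h4 : (fun x : ℝ => -|x|) ⁻¹' s ∩ Iio 0 = s ∩ Iio 0 := by
    ext x; simp only [Set.mem_inter_iff, Set.mem_preimage, Set.mem_Iio]
    constructor
    · rintro ⟨h, hx⟩; rw [abs_of_neg hx, neg_neg] at h; exact ⟨h, hx⟩
    · rintro ⟨h, hx⟩; rw [abs_of_neg hx, neg_neg]; exact ⟨h, hx⟩
  have habs : MeasurableSet ((fun x : ℝ => |x|) ⁻¹' s) := (measurable_abs) hs
  have hnabs : MeasurableSet ((fun x : ℝ => -|x|) ⁻¹' s) := (measurable_abs.neg) hs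
  have split : ∀ t : Set ℝ, μ t = μ (t ∩ Ici 0) + μ (t ∩ Iio 0) := by
    intro t
    have hd : t \ Ici 0 = t ∩ Iio 0 := by
      ext x; simp [Set.mem_diff, not_le]
    rw [← measure_inter_add_diff t measurableSet_Ici, hd]
  have e1 : μ (s ∩ Ioi 0) + μ (s ∩ Iic 0) = μ s := by
    have hd : s \ Ioi 0 = s ∩ Iic 0 := by
      ext x; simp [Set.mem_diff, not_lt]
    rw [← measure_inter_add_diff s measurableSet_Ioi, hd]
  have e2 : μ (s ∩ Ici 0) + μ (s ∩ Iio 0) = μ s := by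
    have hd : s \ Ici 0 = s ∩ Iio 0 := by
      ext x; simp [Set.mem_diff, not_le]
    rw [← measure_inter_add_diff s measurableSet_Ici, hd]
  rw [split _, split ((fun x : ℝ => -|x|) ⁻¹' s), h1, h2, h3, h4,
    hmap _ (hs.inter measurableSet_Ioi), hmap _ (hs.inter measurableSet_Iic)]
  have hre : μ (s ∩ Ici 0) + μ (s ∩ Ioi 0) + (μ (s ∩ Iic 0) + μ (s ∩ Iio 0))
      = (μ (s ∩ Ioi 0) + μ (s ∩ Iic 0)) + (μ (s ∩ Ici 0) + μ (s ∩ Iio 0)) := by ring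
  rw [hre, e1, e2, two_mul]
lemma U_prob : IsProbabilityMeasure (volume.restrict (Set.Ioc (0:ℝ) 1)) := by
  constructor
  rw [Measure.restrict_apply_univ, Real.volume_Ioc]
  norm_num

lemma U_Iic {p : ℝ} (h0 : 0 ≤ p) (h1 : p ≤ 1) :
    (volume.restrict (Set.Ioc (0:ℝ) 1)) (Iic p) = ENNReal.ofReal p := by
  rw [Measure.restrict_apply measurableSet_Iic]
  have : Iic p ∩ Ioc (0:ℝ) 1 = Ioc 0 p := by
    ext u
    simp only [Set.mem_inter_iff, Set.mem_Iic, Set.mem_Ioc]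
    constructor
    · rintro ⟨h, h2, h3⟩; exact ⟨h2, h⟩
    · rintro ⟨h2, h3⟩; exact ⟨h3, h2, le_trans h3 h1⟩
  rw [this, Real.volume_Ioc, sub_zero]

lemma U_Ioi {p : ℝ} (h0 : 0 ≤ p) (h1 : p ≤ 1) :
    (volume.restrict (Set.Ioc (0:ℝ) 1)) (Ioi p) = ENNReal.ofReal (1 - p) := by
  rw [Measure.restrict_apply measurableSet_Ioi]
  have : Ioi p ∩ Ioc (0:ℝ) 1 = Ioc p 1 := by
    ext u
    simp only [Set.mem_inter_iff, Set.mem_Ioi, Set.mem_Ioc]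
    constructor
    · rintro ⟨h, h2, h3⟩; exact ⟨h, h3⟩
    · rintro ⟨h2, h3⟩; exact ⟨h2, lt_of_le_of_lt h0 h2, h3⟩
  rw [this, Real.volume_Ioc]

theorem gaussian_isSpread_of_bounded
    {Ω : Type} [MeasurableSpace Ω] (P : Measure Ω) [IsProbabilityMeasure P]
    (X : Ω → ℝ) (hX : Measurable X) (C : ℝ) (hC : 0 < C)
    (hmean : ∫ ω, X ω ∂P = 0) (hbdd : ∀ᵐ ω ∂P, |X ω| ≤ C) :
    IsSpread (gaussianReal 0 (Real.toNNReal (Real.pi * C ^ 2 / 2))) (P.map X) := by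
  set v : NNReal := Real.toNNReal (Real.pi * C ^ 2 / 2) with hv
  have hvR : (v:ℝ) = Real.pi * C ^ 2 / 2 := Real.coe_toNNReal _ (by positivity)
  have hvne : v ≠ 0 := by
    intro h
    rw [h] at hvR
    simp only [NNReal.coe_zero] at hvR
    have : (0:ℝ) < Real.pi * C ^ 2 / 2 := by positivity
    linarith
  set μG := gaussianReal 0 v with hμG
  set U := volume.restrict (Set.Ioc (0:ℝ) 1) with hU
  haveI : IsProbabilityMeasure U := U_prob
  set ν := μG.prod U with hν
  set P' := P.prod ν with hP'
  haveI : IsProbabilityMeasure P' := by infer_instance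
  set p : Ω → ℝ := fun ω => 2⁻¹ + (2 * C)⁻¹ * X ω with hp
  have hpm : Measurable p := measurable_const.add (measurable_const.mul hX)
  set Y : Ω × ℝ × ℝ → ℝ :=
    fun ω' => (if ω'.2.2 ≤ p ω'.1 then (1:ℝ) else -1) * |ω'.2.1| with hY
  have hsetm : MeasurableSet {ω' : Ω × ℝ × ℝ | ω'.2.2 ≤ p ω'.1} :=
    measurableSet_le measurable_snd.snd (hpm.comp measurable_fst)
  have hYm : Measurable Y :=
    (Measurable.ite hsetm measurable_const measurable_const).mul
      measurable_snd.fst.abs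
  have hX'm : Measurable (fun ω' : Ω × ℝ × ℝ => X ω'.1) := hX.comp measurable_fst
  have hXint : Integrable X P := by
    refine Integrable.mono' (integrable_const C) hX.aestronglyMeasurable ?_
    filter_upwards [hbdd] with ω h
    simpa [Real.norm_eq_abs] using h
  have hmapfst : P'.map Prod.fst = P := by
    rw [hP', Measure.map_fst_prod]; simp
  have hmapX' : P'.map (fun ω' : Ω × ℝ × ℝ => X ω'.1) = P.map X := by
    rw [show (fun ω' : Ω × ℝ × ℝ => X ω'.1) = X ∘ Prod.fst from rfl,
      ← Measure.map_map hX measurable_fst, hmapfst]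
  have hmapz : P'.map (fun ω' : Ω × ℝ × ℝ => ω'.2.1) = μG := by
    rw [show (fun ω' : Ω × ℝ × ℝ => ω'.2.1) = Prod.fst ∘ Prod.snd from rfl,
      ← Measure.map_map measurable_fst measurable_snd, hP', Measure.map_snd_prod]
    simp [hν, Measure.map_fst_prod]
  have habs' : Integrable (fun ω' : Ω × ℝ × ℝ => |ω'.2.1|) P' := by
    have h1 : Integrable (fun x : ℝ => |x|) (P'.map (fun ω' : Ω × ℝ × ℝ => ω'.2.1)) := by
      rw [hmapz]; exact integrable_abs_gaussianReal
    exact (integrable_map_measure measurable_abs.aestronglyMeasurable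
      measurable_snd.fst.aemeasurable).mp h1
  have hYint : Integrable Y P' := by
    refine Integrable.mono' habs' hYm.aestronglyMeasurable ?_
    filter_upwards with ω'
    rw [hY, Real.norm_eq_abs, abs_mul]
    split <;> simp
  have hX'int : Integrable (fun ω' : Ω × ℝ × ℝ => X ω'.1) P' := by
    have h1 : Integrable X (P'.map Prod.fst) := by rw [hmapfst]; exact hXint
    exact (integrable_map_measure hX.aestronglyMeasurable
      measurable_fst.aemeasurable).mp h1
  have hmapY : P'.map Y = μG := by
    refine Measure.ext fun s hs => ?_
    rw [Measure.map_apply hYm hs]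
    have hA : MeasurableSet (Y ⁻¹' s) := hYm hs
    rw [hP', Measure.prod_apply hA]
    set K1 := μG ((fun x : ℝ => |x|) ⁻¹' s) with hK1
    set K2 := μG ((fun x : ℝ => -|x|) ⁻¹' s) with hK2
    have key : ∀ᵐ ω ∂P, ν (Prod.mk ω ⁻¹' (Y ⁻¹' s))
        = ENNReal.ofReal (p ω) * K1 + ENNReal.ofReal (1 - p ω) * K2 := by
      filter_upwards [hbdd] with ω hb
      obtain ⟨hbl, hbu⟩ := abs_le.mp hb
      have h2C : (0:ℝ) < 2 * C := by positivity
      have heq : (2⁻¹ : ℝ) + (2 * C)⁻¹ * X ω = (C + X ω) / (2 * C) := by field_simp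
      have hp0 : 0 ≤ p ω := by
        show (0:ℝ) ≤ 2⁻¹ + (2 * C)⁻¹ * X ω
        rw [heq]
        exact div_nonneg (by linarith) h2C.le
      have hp1 : p ω ≤ 1 := by
        show (2⁻¹ : ℝ) + (2 * C)⁻¹ * X ω ≤ 1
        rw [heq, div_le_one h2C]
        linarith
      have hmk : MeasurableSet (Prod.mk ω ⁻¹' (Y ⁻¹' s)) := measurable_prodMk_left hA
      rw [hν, Measure.prod_apply hmk]
      have hslice : ∀ z : ℝ, U (Prod.mk z ⁻¹' (Prod.mk ω ⁻¹' (Y ⁻¹' s)))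
          = ENNReal.ofReal (p ω) * Set.indicator s (fun _ => 1) (|z|)
            + ENNReal.ofReal (1 - p ω) * Set.indicator s (fun _ => 1) (-|z|) := by
        intro z
        have hpre : Prod.mk z ⁻¹' (Prod.mk ω ⁻¹' (Y ⁻¹' s))
            = {u : ℝ | (if u ≤ p ω then (1:ℝ) else -1) * |z| ∈ s} := rfl
        by_cases h1 : |z| ∈ s <;> by_cases h2 : -|z| ∈ s
        · have : {u : ℝ | (if u ≤ p ω then (1:ℝ) else -1) * |z| ∈ s} = Set.univ := by
            ext u
            simp only [Set.mem_setOf_eq, Set.mem_univ, iff_true]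
            split
            · rwa [one_mul]
            · rwa [neg_one_mul]
          rw [hpre, this, measure_univ, Set.indicator_of_mem h1, Set.indicator_of_mem h2,
            mul_one, mul_one, ← ENNReal.ofReal_add hp0 (by linarith)]
          norm_num
        · have : {u : ℝ | (if u ≤ p ω then (1:ℝ) else -1) * |z| ∈ s} = Iic (p ω) := by
            ext u
            simp only [Set.mem_setOf_eq, Set.mem_Iic]
            constructor
            · intro h
              by_contra hc
              rw [if_neg hc, neg_one_mul] at h
              exact h2 h
            · intro h
              rw [if_pos h, one_mul]
              exact h1
          rw [hpre, this, hU, U_Iic hp0 hp1, Set.indicator_of_mem h1,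
            Set.indicator_of_notMem h2, mul_one, mul_zero, add_zero]
        · have : {u : ℝ | (if u ≤ p ω then (1:ℝ) else -1) * |z| ∈ s} = Ioi (p ω) := by
            ext u
            simp only [Set.mem_setOf_eq, Set.mem_Ioi]
            constructor
            · intro h
              by_contra hc
              rw [not_lt] at hc
              rw [if_pos hc, one_mul] at h
              exact h1 h
            · intro h
              rw [if_neg (not_le.mpr h), neg_one_mul]
              exact h2
          rw [hpre, this, hU, U_Ioi hp0 hp1, Set.indicator_of_notMem h1,
            Set.indicator_of_mem h2, mul_one, mul_zero, zero_add]
        · have : {u : ℝ | (if u ≤ p ω then (1:ℝ) else -1) * |z| ∈ s} = ∅ := by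
            ext u
            simp only [Set.mem_setOf_eq, Set.mem_empty_iff_false, iff_false]
            intro h
            split at h
            · rw [one_mul] at h; exact h1 h
            · rw [neg_one_mul] at h; exact h2 h
          rw [hpre, this, measure_empty, Set.indicator_of_notMem h1,
            Set.indicator_of_notMem h2, mul_zero, mul_zero, add_zero]
      have hind1 : Measurable fun a : ℝ => Set.indicator s (fun _ => (1:ENNReal)) (|a|) :=
        (measurable_const.indicator hs).comp measurable_abs
      have hind2 : Measurable fun a : ℝ => Set.indicator s (fun _ => (1:ENNReal)) (-|a|) :=
        (measurable_const.indicator hs).comp measurable_abs.neg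
      rw [lintegral_congr hslice,
        lintegral_add_left (hind1.const_mul _)]
      rw [lintegral_const_mul _ hind1, lintegral_const_mul _ hind2]
      rw [lintegral_indicator_const_comp measurable_abs hs,
        lintegral_indicator_const_comp (by fun_prop : Measurable fun a : ℝ => -|a|) hs]
      rw [one_mul, one_mul, hK1, hK2, hμG]
    rw [lintegral_congr_ae key, lintegral_add_left (by fun_prop)]
    rw [lintegral_mul_const _ (by fun_prop), lintegral_mul_const _ (by fun_prop)]
    have hpint : Integrable p P := (integrable_const _).add (hXint.const_mul _)
    have hip : ∫⁻ ω, ENNReal.ofReal (p ω) ∂P = ENNReal.ofReal 2⁻¹ := by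
      rw [← ofReal_integral_eq_lintegral_ofReal hpint ?_]
      · congr 1
        simp only [hp]
        rw [integral_add (integrable_const _) (hXint.const_mul _), integral_const,
          integral_const_mul, hmean]
        simp
      · filter_upwards [hbdd] with ω hb
        obtain ⟨hbl, hbu⟩ := abs_le.mp hb
        have h2C : (0:ℝ) < 2 * C := by positivity
        simp only [Pi.zero_apply]
        show (0:ℝ) ≤ 2⁻¹ + (2 * C)⁻¹ * X ω
        rw [show (2⁻¹ : ℝ) + (2 * C)⁻¹ * X ω = (C + X ω) / (2 * C) by field_simp]
        exact div_nonneg (by linarith) h2C.le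
    have hiq : ∫⁻ ω, ENNReal.ofReal (1 - p ω) ∂P = ENNReal.ofReal 2⁻¹ := by
      have hqint : Integrable (fun ω => 1 - p ω) P := (integrable_const _).sub hpint
      rw [← ofReal_integral_eq_lintegral_ofReal hqint ?_]
      · congr 1
        rw [integral_sub (integrable_const _) hpint, integral_const]
        simp only [hp]
        rw [integral_add (integrable_const _) (hXint.const_mul _), integral_const,
          integral_const_mul, hmean]
        simp
        norm_num
      · filter_upwards [hbdd] with ω hb
        obtain ⟨hbl, hbu⟩ := abs_le.mp hb
        have h2C : (0:ℝ) < 2 * C := by positivity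
        simp only [Pi.zero_apply]
        show (0:ℝ) ≤ 1 - p ω
        show (0:ℝ) ≤ 1 - (2⁻¹ + (2 * C)⁻¹ * X ω)
        rw [show (1:ℝ) - (2⁻¹ + (2 * C)⁻¹ * X ω) = (C - X ω) / (2 * C) by field_simp; ring]
        exact div_nonneg (by linarith) h2C.le
    rw [hip, hiq]
    have htwo : ENNReal.ofReal 2⁻¹ * 2 = 1 := by
      rw [show (2 : ENNReal) = ENNReal.ofReal 2 by norm_num, ← ENNReal.ofReal_mul (by norm_num)]
      norm_num
    calc ENNReal.ofReal 2⁻¹ * K1 + ENNReal.ofReal 2⁻¹ * K2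
        = ENNReal.ofReal 2⁻¹ * (K1 + K2) := by ring
      _ = ENNReal.ofReal 2⁻¹ * (2 * μG s) := by
          rw [hK1, hK2, hμG, gaussian_symm_split hs]
      _ = (ENNReal.ofReal 2⁻¹ * 2) * μG s := by ring
      _ = μG s := by rw [htwo, one_mul]
  have hEabs : ∫ x, |x| ∂μG = C := by
    rw [hμG, integral_abs_gaussianReal hvne, hvR,
      show 2 * (Real.pi * C ^ 2 / 2) / Real.pi = C ^ 2 by
        field_simp]
    exact Real.sqrt_sq hC.le
  have hcond : P'[Y | MeasurableSpace.comap (fun ω' : Ω × ℝ × ℝ => X ω'.1) inferInstance]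
      =ᵐ[P'] (fun ω' : Ω × ℝ × ℝ => X ω'.1) := by
    have hm : MeasurableSpace.comap (fun ω' : Ω × ℝ × ℝ => X ω'.1) inferInstance
        ≤ Prod.instMeasurableSpace := hX'm.comap_le
    haveI : SigmaFinite (P'.trim hm) := inferInstance
    have hXmm : Measurable[MeasurableSpace.comap (fun ω' : Ω × ℝ × ℝ => X ω'.1) inferInstance]
        (fun ω' : Ω × ℝ × ℝ => X ω'.1) := fun t ht => ⟨t, ht, rfl⟩
    refine (ae_eq_condExp_of_forall_setIntegral_eq hm hYint
      (fun t _ _ => hX'int.integrableOn) ?_ ?_).symm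
    swap
    · exact ⟨fun ω' => X ω'.1, hXmm.stronglyMeasurable, EventuallyEq.rfl⟩
    intro t htm _
    obtain ⟨B, hB, hBeq⟩ := htm
    have hDm : MeasurableSet (X ⁻¹' B) := hX hB
    have hprod : t = (X ⁻¹' B) ×ˢ (Set.univ : Set (ℝ × ℝ)) := by
      rw [← hBeq]
      ext ω'
      simp [Set.mem_prod]
    subst hprod
    rw [hP', setIntegral_prod _ (hX'int.integrableOn), setIntegral_prod _ (hYint.integrableOn)]
    simp only [Measure.restrict_univ]
    have habsν : Integrable (fun zu : ℝ × ℝ => |zu.1|) ν := by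
      have hmfst : ν.map Prod.fst = μG := by rw [hν, Measure.map_fst_prod]; simp
      have h1 : Integrable (fun x : ℝ => |x|) (ν.map Prod.fst) := by
        rw [hmfst]; exact integrable_abs_gaussianReal
      exact (integrable_map_measure measurable_abs.aestronglyMeasurable
        measurable_fst.aemeasurable).mp h1
    refine setIntegral_congr_ae hDm ?_
    filter_upwards [hbdd] with ω hb _
    obtain ⟨hbl, hbu⟩ := abs_le.mp hb
    have h2C : (0:ℝ) < 2 * C := by positivity
    have heq : (2⁻¹ : ℝ) + (2 * C)⁻¹ * X ω = (C + X ω) / (2 * C) := by field_simp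
    have hp0 : 0 ≤ p ω := by
      show (0:ℝ) ≤ 2⁻¹ + (2 * C)⁻¹ * X ω
      rw [heq]
      exact div_nonneg (by linarith) h2C.le
    have hp1 : p ω ≤ 1 := by
      show (2⁻¹ : ℝ) + (2 * C)⁻¹ * X ω ≤ 1
      rw [heq, div_le_one h2C]
      linarith
    -- inner integral over ν of the constant X ω
    rw [integral_const, probReal_univ, one_smul]
    -- now compute ∫ zu, Y (ω, zu) ∂ν
    have hYω : (fun zu : ℝ × ℝ => Y (ω, zu))
        = fun zu : ℝ × ℝ => (if zu.2 ≤ p ω then (1:ℝ) else -1) * |zu.1| := rfl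
    rw [hYω]
    have hintν : Integrable (fun zu : ℝ × ℝ => (if zu.2 ≤ p ω then (1:ℝ) else -1) * |zu.1|) ν := by
      refine Integrable.mono' habsν ?_ ?_
      · refine AEStronglyMeasurable.mul ?_ measurable_fst.abs.aestronglyMeasurable
        exact (Measurable.ite (measurableSet_le measurable_snd measurable_const)
          measurable_const measurable_const).aestronglyMeasurable
      · filter_upwards with zu
        rw [Real.norm_eq_abs, abs_mul]
        split <;> simp
    rw [hν, integral_prod _ (by rw [← hν]; exact hintν)]
    have hcval : ∫ u, (if u ≤ p ω then (1:ℝ) else -1) ∂U = 2 * p ω - 1 := by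
      have hcrep : ∀ u : ℝ, (if u ≤ p ω then (1:ℝ) else -1)
          = 2 * Set.indicator (Iic (p ω)) (fun _ => (1:ℝ)) u - 1 := by
        intro u
        by_cases h : u ≤ p ω
        · rw [if_pos h, Set.indicator_of_mem (Set.mem_Iic.mpr h)]; norm_num
        · rw [if_neg h, Set.indicator_of_notMem (by simpa using h)]; norm_num
      simp_rw [hcrep]
      have hii : Integrable (Set.indicator (Iic (p ω)) (fun _ => (1:ℝ))) U :=
        (integrable_const (1:ℝ)).indicator measurableSet_Iic
      rw [integral_sub ((hii.const_mul 2)) (integrable_const 1), integral_const_mul,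
        integral_indicator_const _ measurableSet_Iic, integral_const]
      rw [hU, measureReal_def, U_Iic hp0 hp1]
      rw [ENNReal.toReal_ofReal hp0]
      simp [measureReal_def, measure_univ]
    have hinner : ∀ z : ℝ, ∫ u, (if u ≤ p ω then (1:ℝ) else -1) * |z| ∂U
        = (2 * p ω - 1) * |z| := by
      intro z
      rw [integral_mul_const, hcval]
    calc X ω = (2 * p ω - 1) * C := by
          show X ω = (2 * (2⁻¹ + (2 * C)⁻¹ * X ω) - 1) * C
          field_simp
          ring
      _ = ∫ z, (2 * p ω - 1) * |z| ∂μG := by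
          rw [integral_const_mul, hEabs]
      _ = ∫ z, ∫ u, (if u ≤ p ω then (1:ℝ) else -1) * |z| ∂U ∂μG := by
          refine (integral_congr_ae ?_).symm
          filter_upwards with z
          rw [hinner z]
  exact ⟨Ω × ℝ × ℝ, inferInstance, P', inferInstance, (fun ω' => X ω'.1), Y,
    hX'm, hYm, hmapX', hmapY, hcond⟩
end

section
/- Let M be an n×n positive semidefinite matrix with M ⪯ LcI, where c ≥ 1 and L ≥ 0 are reals. Then for any vector v ∈ ℝⁿ with ‖v‖₂ ≤ 1, the matrix M' = (I - c⁻¹vvᵀ)M(I - c⁻¹vvᵀ) + Lvvᵀ satisfies 0 ⪯ M' ⪯ LcI. -/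
open Matrix

lemma psd_smul_aux {n : ℕ} {A : Matrix (Fin n) (Fin n) ℝ} (hA : A.PosSemidef) {a : ℝ}
    (ha : 0 ≤ a) : (a • A).PosSemidef := by
  refine Matrix.PosSemidef.of_dotProduct_mulVec_nonneg ?_ fun x => ?_
  · unfold Matrix.IsHermitian
    rw [conjTranspose_smul, hA.1.eq]; simp
  · rw [smul_mulVec, dotProduct_smul, smul_eq_mul]
    exact mul_nonneg ha (hA.dotProduct_mulVec_nonneg x)

lemma psd_vmv_aux {n : ℕ} (v : Fin n → ℝ) : (vecMulVec v v).PosSemidef := by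
  refine Matrix.PosSemidef.of_dotProduct_mulVec_nonneg ?_ fun x => ?_
  · ext i j; simp [vecMulVec_apply, conjTranspose_apply, mul_comm]
  · have : dotProduct (star x) (vecMulVec v v *ᵥ x) = (∑ i, v i * x i)^2 := by
      simp [dotProduct, mulVec, vecMulVec_apply, Finset.mul_sum, Finset.sum_mul, sq,
        mul_comm, mul_assoc, mul_left_comm]
    rw [this]; positivity

lemma vmv_sq_aux {n : ℕ} (v : Fin n → ℝ) :
    vecMulVec v v * vecMulVec v v = (∑ i, v i ^ 2) • vecMulVec v v := by
  ext i j
  simp only [mul_apply, vecMulVec_apply, Matrix.smul_apply, smul_eq_mul]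
  rw [Finset.sum_mul]
  exact Finset.sum_congr rfl fun k _ => by ring

lemma vmv_symm_aux {n : ℕ} (v : Fin n → ℝ) : (vecMulVec v v)ᴴ = vecMulVec v v := by
  ext i j; simp [vecMulVec_apply, conjTranspose_apply, mul_comm]

theorem covar_update_psd_le {n : ℕ}
    (M : Matrix (Fin n) (Fin n) ℝ) (L c : ℝ) (hc : 1 ≤ c) (hL : 0 ≤ L)
    (hM : M.PosSemidef) (hMle : ((L * c) • (1 : Matrix (Fin n) (Fin n) ℝ) - M).PosSemidef)
    (v : Fin n → ℝ) (hv : ∑ i, v i ^ 2 ≤ 1) :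
    ((1 - c⁻¹ • vecMulVec v v) * M * (1 - c⁻¹ • vecMulVec v v)
        + L • vecMulVec v v).PosSemidef ∧
      ((L * c) • (1 : Matrix (Fin n) (Fin n) ℝ)
        - ((1 - c⁻¹ • vecMulVec v v) * M * (1 - c⁻¹ • vecMulVec v v)
          + L • vecMulVec v v)).PosSemidef := by
  set W : Matrix (Fin n) (Fin n) ℝ := vecMulVec v v with hW
  set P : Matrix (Fin n) (Fin n) ℝ := 1 - c⁻¹ • W with hP
  have hc0 : c ≠ 0 := by positivity
  have hW2 : W * W = (∑ i, v i ^ 2) • W := vmv_sq_aux v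
  have hPH : Pᴴ = P := by
    rw [hP, conjTranspose_sub, conjTranspose_smul, conjTranspose_one, vmv_symm_aux]
    simp [hW]
  have hPMP : (P * M * P).PosSemidef := by
    have := hM.conjTranspose_mul_mul_same P
    rwa [hPH] at this
  constructor
  · exact hPMP.add (psd_smul_aux (psd_vmv_aux v) hL)
  · have key : P * ((L*c)•1 - M) * P + (L*(1 - c⁻¹ * (∑ i, v i ^ 2)))•W
        = (L*c)•(1 : Matrix (Fin n) (Fin n) ℝ) - (P * M * P + L•W) := by
      simp only [hP, mul_sub, sub_mul, smul_mul_assoc, mul_smul_comm, mul_one, one_mul,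
        smul_sub, smul_smul, hW2]
      match_scalars <;> field_simp <;> ring
    rw [← key]
    have hcoef : 0 ≤ L * (1 - c⁻¹ * (∑ i, v i ^ 2)) := by
      have h1 : c⁻¹ ≤ 1 := inv_le_one_of_one_le₀ hc
      have h2 : 0 ≤ c⁻¹ := by positivity
      have h3 : 0 ≤ ∑ i, v i ^ 2 := by positivity
      have : c⁻¹ * (∑ i, v i ^ 2) ≤ 1 := by
        calc c⁻¹ * (∑ i, v i ^ 2) ≤ 1 * 1 := mul_le_mul h1 hv h3 zero_le_one
        _ = 1 := by ring
      nlinarith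
    have hconj : (P * ((L*c)•1 - M) * P).PosSemidef := by
      have := hMle.conjTranspose_mul_mul_same P
      rwa [hPH] at this
    exact hconj.add (psd_smul_aux (psd_vmv_aux v) hcoef)
end
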